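/- Let f : ℝ^k → ℝ be σ-strongly convex, g concave, z ∈ ℝ^k with g(z) > 0 and f(z) ≥ 0, and x ∈ ℝ^k with g(x) > 0, θ := f(x)/g(x) ≥ 0. Suppose ⟨x − z, f′(x) + θ h′(x)⟩ ≤ 0 for some f′(x) ∈ ∂f(x) and h′(x) ∈ ∂(−g)(x). Then θ ≤ f(z)/g(z) and, moreover, σ‖x − z‖ ≤ ‖f′(z)‖ + (f(z)/g(z))‖h′(z)‖ for any f′(z) ∈ ∂f(z) and h′(z) ∈ ∂(−g)(z). -/
import Mathlib


open scoped RealInnerProductSpace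

private lemma strong_subgrad {k : ℕ}
    (f : EuclideanSpace ℝ (Fin k) → ℝ) (σ : ℝ) (hσ : 0 < σ)
    (hf : ∀ x y : EuclideanSpace ℝ (Fin k), ∀ α : ℝ, α ∈ Set.Icc (0:ℝ) 1 →
      f (α • x + (1 - α) • y) ≤ α * f x + (1 - α) * f y
        - σ / 2 * α * (1 - α) * ‖x - y‖ ^ 2)
    (x : EuclideanSpace ℝ (Fin k)) (v : EuclideanSpace ℝ (Fin k))
    (hv : ∀ u, ⟪v, u - x⟫ ≤ f u - f x)
    (w : EuclideanSpace ℝ (Fin k)) :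
    ⟪v, w - x⟫ ≤ f w - f x - σ / 2 * ‖w - x‖ ^ 2 := by
  by_cases hwx : w = x
  · subst hwx; simp
  · have hc : 0 < σ / 2 * ‖w - x‖ ^ 2 := by
      have : 0 < ‖w - x‖ := norm_pos_iff.mpr (sub_ne_zero.mpr hwx)
      positivity
    set c := σ / 2 * ‖w - x‖ ^ 2 with hcdef
    have key : ∀ ε : ℝ, 0 < ε → ⟪v, w - x⟫ ≤ (f w - f x - c) + ε := by
      intro ε hε
      set α : ℝ := min 1 (ε / c) with hα
      have hα0 : 0 < α := lt_min one_pos (div_pos hε hc)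
      have hα1 : α ≤ 1 := min_le_left _ _
      have hαc : α * c ≤ ε := by
        have : α ≤ ε / c := min_le_right _ _
        calc α * c ≤ (ε / c) * c := by nlinarith
          _ = ε := by field_simp
      have h1 := hv (α • w + (1 - α) • x)
      have h2 := hf w x α ⟨le_of_lt hα0, hα1⟩
      have heq : (α • w + (1 - α) • x) - x = α • (w - x) := by
        module
      rw [heq, real_inner_smul_right] at h1
      have h3 : α * ⟪v, w - x⟫ ≤ α * f w + (1 - α) * f x - σ / 2 * α * (1 - α) * ‖w - x‖ ^ 2 - f x :=
        le_trans h1 (by linarith)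
      have h4 : α * ⟪v, w - x⟫ ≤ α * (f w - f x - (1 - α) * c) := by
        rw [hcdef]; ring_nf; ring_nf at h3; linarith
      have h5 : ⟪v, w - x⟫ ≤ f w - f x - (1 - α) * c :=
        le_of_mul_le_mul_left (by linarith [h4]) hα0
      nlinarith
    linarith [le_of_forall_pos_le_add key]

theorem strongly_convex_case_bounds {k : ℕ}
    (f g : EuclideanSpace ℝ (Fin k) → ℝ) (σ : ℝ) (hσ : 0 < σ)
    (hf : ∀ x y : EuclideanSpace ℝ (Fin k), ∀ α : ℝ, α ∈ Set.Icc (0:ℝ) 1 →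
      f (α • x + (1 - α) • y) ≤ α * f x + (1 - α) * f y
        - σ / 2 * α * (1 - α) * ‖x - y‖ ^ 2)
    (hg : ConcaveOn ℝ Set.univ g)
    (z x : EuclideanSpace ℝ (Fin k))
    (hgz : 0 < g z) (hfz : 0 ≤ f z) (hgx : 0 < g x)
    (θ : ℝ) (hθ : θ = f x / g x) (hθ0 : 0 ≤ θ)
    (fx hx : EuclideanSpace ℝ (Fin k))
    (hfx : ∀ w, ⟪fx, w - x⟫ ≤ f w - f x)
    (hhx : ∀ w, ⟪hx, w - x⟫ ≤ -g w + g x)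
    (hkey : ⟪x - z, fx + θ • hx⟫ ≤ 0) :
    θ ≤ f z / g z ∧
      ∀ fz hz : EuclideanSpace ℝ (Fin k),
        (∀ w, ⟪fz, w - z⟫ ≤ f w - f z) →
        (∀ w, ⟪hz, w - z⟫ ≤ -g w + g z) →
        σ * ‖x - z‖ ≤ ‖fz‖ + (f z / g z) * ‖hz‖ := by
  have hfxgx : f x = θ * g x := by rw [hθ]; field_simp
  -- expand hkey
  have hkey' : ⟪fx, x - z⟫ + θ * ⟪hx, x - z⟫ ≤ 0 := by
    rw [real_inner_comm] at hkey
    rwa [inner_add_left, real_inner_smul_left] at hkey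
  have hzx : ⟪fx, z - x⟫ = -⟪fx, x - z⟫ := by
    rw [show (z - x : EuclideanSpace ℝ (Fin k)) = -(x - z) by module, inner_neg_right]
  have hzx' : ⟪hx, z - x⟫ = -⟪hx, x - z⟫ := by
    rw [show (z - x : EuclideanSpace ℝ (Fin k)) = -(x - z) by module, inner_neg_right]
  -- combined subgradient inequality at x evaluated at z
  have h1 := hfx z
  have h2 := hhx z
  have hpart1 : 0 ≤ f z - θ * g z := by
    have : ⟪fx, z - x⟫ + θ * ⟪hx, z - x⟫ ≤ (f z - f x) + θ * (-g z + g x) := by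
      nlinarith [mul_le_mul_of_nonneg_left h2 hθ0]
    rw [hzx, hzx'] at this
    nlinarith
  have hθ' : θ ≤ f z / g z := by
    rw [le_div_iff₀ hgz]; linarith
  have hθ'0 : 0 ≤ f z / g z := div_nonneg hfz hgz.le
  refine ⟨hθ', ?_⟩
  intro fz hz hfz' hhz'
  -- strong subgradient inequalities
  have s1 := strong_subgrad f σ hσ hf x fx hfx z
  have s2 := strong_subgrad f σ hσ hf z fz hfz' x
  have hnorm : ‖z - x‖ = ‖x - z‖ := by rw [← norm_neg]; congr 1; module
  rw [hnorm, hzx] at s1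
  have m1 := hhx z
  rw [hzx'] at m1
  have m2 := hhz' x
  have cs1 : -⟪fz, x - z⟫ ≤ ‖fz‖ * ‖x - z‖ := by
    have h := abs_real_inner_le_norm fz (x - z)
    have h' := neg_abs_le ⟪fz, x - z⟫
    linarith
  have cs2 : -⟪hz, x - z⟫ ≤ ‖hz‖ * ‖x - z‖ := by
    have h := abs_real_inner_le_norm hz (x - z)
    have h' := neg_abs_le ⟪hz, x - z⟫
    linarith
  -- abstract everything into scalars
  set A := ⟪fx, x - z⟫ with hA
  set B := ⟪hx, x - z⟫ with hB
  set C := ⟪fz, x - z⟫ with hC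
  set D := ⟪hz, x - z⟫ with hD
  set n := ‖x - z‖ with hn
  set F := ‖fz‖ with hF
  set H := ‖hz‖ with hH
  set θ' := f z / g z with hθ'def
  have hn0 : 0 ≤ n := norm_nonneg _
  have hF0 : 0 ≤ F := norm_nonneg _
  have hH0 : 0 ≤ H := norm_nonneg _
  clear_value A B C D n F H
  clear hA hB hC hD hF hH hn hf hg hfx hhx hfz' hhz' hkey hzx hzx' h1 h2 hnorm fz hz fx hx
  -- monotonicity of h subgradients: D - B ≤ 0
  have hmono : D - B ≤ 0 := by linarith
  -- strong monotonicity: σ n² ≤ A - C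
  have smono : σ * n ^ 2 ≤ A - C := by nlinarith [s1, s2]
  -- chain:  σ n² ≤ -C - θ D ≤ F n + θ H n ≤ F n + θ' H n
  have step1 : σ * n ^ 2 ≤ -C - θ * D := by
    nlinarith [mul_le_mul_of_nonneg_left hmono hθ0]
  have step2 : -θ * D ≤ θ * (H * n) := by
    nlinarith [mul_le_mul_of_nonneg_left cs2 hθ0]
  have step3 : θ * (H * n) ≤ θ' * (H * n) :=
    mul_le_mul_of_nonneg_right hθ' (by positivity)
  have final : σ * n ^ 2 ≤ F * n + θ' * (H * n) := by linarith
  rcases eq_or_lt_of_le hn0 with h0 | h0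
  · rw [← h0]
    have : 0 ≤ F + θ' * H := by positivity
    linarith
  · have hmul : (σ * n) * n ≤ (F + θ' * H) * n := by nlinarith
    exact le_of_mul_le_mul_right hmul h0
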